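/- Let G be an EFL graph of parameter k, i.e., a union of k cliques of order k pairwise intersecting in at most one vertex. If the subgraph induced by the vertices of clique degree at least 2 has maximum degree at most k − 1, then G is k-choosable: ch(G) ≤ k, so the Erdős–Faber–Lovász conjecture (in its list version) holds for such graphs. -/

import Mathlib

open MvPolynomial

/-- An arbitrary linear labeling of a finite vertex type. -/
noncomputable def someLinearOrder (V : Type*) [Fintype V] : LinearOrder V :=
  LinearOrder.lift' (Fintype.equivFin V) (Fintype.equivFin V).injective

/-- The graph polynomial `∏_{ij ∈ E, i<j} (x_i − x_j)` with respect to a given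
linear labeling of the vertices. -/
noncomputable def graphPolyAux {V : Type*} [Fintype V] (lo : LinearOrder V)
    (G : SimpleGraph V) : MvPolynomial V ℤ :=
  letI := lo
  letI := Classical.decRel G.Adj
  ∏ p ∈ Finset.univ.filter (fun p : V × V => G.Adj p.1 p.2 ∧ p.1 < p.2), (X p.1 - X p.2)

/-- The graph polynomial of `G` (its monomial support does not depend on the labeling). -/
noncomputable def graphPoly {V : Type*} [Fintype V] (G : SimpleGraph V) : MvPolynomial V ℤ :=
  graphPolyAux (someLinearOrder V) G

/-- The Alon–Tarsi number of `G`: one plus the minimum, over monomials with nonzero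
coefficient in the graph polynomial, of the maximum exponent of a variable. -/
noncomputable def alonTarsiNumber {V : Type*} [Fintype V] (G : SimpleGraph V) : ℕ :=
  1 + sInf {d : ℕ | ∃ m ∈ (graphPoly G).support, d = Finset.univ.sup fun v => m v}

/-- `G` is colorable from any assignment of lists of size `t`. -/
def Choosable {V : Type*} (G : SimpleGraph V) (t : ℕ) : Prop :=
  ∀ L : V → Finset ℕ, (∀ v, (L v).card = t) →
    ∃ c : V → ℕ, (∀ v, c v ∈ L v) ∧ ∀ ⦃v w⦄, G.Adj v w → c v ≠ c w

/-- The choice number (list chromatic number) of `G`. -/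
noncomputable def choiceNumber {V : Type*} (G : SimpleGraph V) : ℕ :=
  sInf {t : ℕ | Choosable G t}

/-- `M` is a 1-factorization of `G` into `Δ` perfect matchings. -/
def IsOneFactorization {V : Type*} (G : SimpleGraph V) {Δ : ℕ}
    (M : Fin Δ → G.Subgraph) : Prop :=
  (∀ i, (M i).IsPerfectMatching) ∧
  (∀ i j, i ≠ j → Disjoint (M i).edgeSet (M j).edgeSet) ∧
  (⋃ i, (M i).edgeSet) = G.edgeSet

/-- `G` is 1-factorizable into `Δ` perfect matchings. -/
def OneFactorizable {V : Type*} (G : SimpleGraph V) (Δ : ℕ) : Prop :=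
  ∃ M : Fin Δ → G.Subgraph, IsOneFactorization G M

/-- The total graph of `G`, on vertex set `V(G) ⊕ E(G)`. -/
def totalGraph {V : Type*} (G : SimpleGraph V) : SimpleGraph (V ⊕ G.edgeSet) where
  Adj x y := match x, y with
    | .inl v, .inl w => G.Adj v w
    | .inl v, .inr e => v ∈ (e : Sym2 V)
    | .inr e, .inl v => v ∈ (e : Sym2 V)
    | .inr e, .inr f => e ≠ f ∧ ∃ v, v ∈ (e : Sym2 V) ∧ v ∈ (f : Sym2 V)
  symm := by
    constructor
    rintro (v | e) (w | f) h
    · exact h.symm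
    · exact h
    · exact h
    · exact ⟨h.1.symm, h.2.imp fun v hv => ⟨hv.2, hv.1⟩⟩
  loopless := by
    constructor
    rintro (v | e) h
    · exact G.loopless.irrefl v h
    · exact h.1 rfl

/-- The subdivision graph of `G`, on vertex set `V(G) ⊕ E(G)`. -/
def subdivisionGraph {V : Type*} (G : SimpleGraph V) : SimpleGraph (V ⊕ G.edgeSet) where
  Adj x y := match x, y with
    | .inl v, .inr e => v ∈ (e : Sym2 V)
    | .inr e, .inl v => v ∈ (e : Sym2 V)
    | _, _ => False
  symm := by constructor; rintro (v | e) (w | f) h <;> simp_all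
  loopless := by constructor; rintro (v | e) h <;> simp_all

/-- The square of a graph: adjacency at distance 1 or 2. -/
def squareGraph {W : Type*} (H : SimpleGraph W) : SimpleGraph W where
  Adj u v := u ≠ v ∧ (H.Adj u v ∨ ∃ w, H.Adj u w ∧ H.Adj w v)
  symm := ⟨fun u v ⟨hne, h⟩ =>
    ⟨hne.symm, h.imp (fun a => a.symm) fun ⟨w, h1, h2⟩ => ⟨w, h2.symm, h1.symm⟩⟩⟩
  loopless := ⟨fun u h => h.1 rfl⟩

section Greedy

variable {V : Type*} [Fintype V] [DecidableEq V]

noncomputable def greedyColor (G : SimpleGraph V) [DecidableRel G.Adj]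
    (r : V → ℕ) (L : V → Finset ℕ) (v : V) : ℕ :=
  if h : (L v \ ((Finset.univ.filter fun w => G.Adj v w ∧ r w < r v).attach.image
      fun w => greedyColor G r L w.1)).Nonempty
  then h.choose else 0
termination_by r v
decreasing_by
  all_goals
    have h2 := w.2
    simp only [Finset.mem_filter, Finset.mem_univ, true_and] at h2
    exact h2.2

theorem greedy_spec (G : SimpleGraph V) [DecidableRel G.Adj]
    (r : V → ℕ) (L : V → Finset ℕ) (v : V)
    (hb : (Finset.univ.filter fun w => G.Adj v w ∧ r w < r v).card < (L v).card) :
    greedyColor G r L v ∈ L v ∧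
      ∀ w, G.Adj v w → r w < r v → greedyColor G r L v ≠ greedyColor G r L w := by
  set N := Finset.univ.filter fun w => G.Adj v w ∧ r w < r v with hN
  set T := N.attach.image fun w => greedyColor G r L w.1 with hT
  have hne : (L v \ T).Nonempty := by
    have h1 : T.card ≤ N.card := le_trans Finset.card_image_le (by simp)
    have h2 : (L v).card ≤ (L v \ T).card + T.card := Finset.card_le_card_sdiff_add_card
    have : 0 < (L v \ T).card := by omega
    exact Finset.card_pos.mp this
  have heq : greedyColor G r L v = hne.choose := by
    rw [greedyColor]
    exact dif_pos hne
  have hmem : greedyColor G r L v ∈ L v \ T := heq ▸ hne.choose_spec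
  rw [Finset.mem_sdiff] at hmem
  refine ⟨hmem.1, fun w hadj hlt hcontra => hmem.2 ?_⟩
  rw [hT]
  apply Finset.mem_image.mpr
  refine ⟨⟨w, ?_⟩, Finset.mem_attach _ _, hcontra.symm⟩
  simp [hN, hadj, hlt]

theorem choosable_of_rank (G : SimpleGraph V) [DecidableRel G.Adj] (t : ℕ) (r : V → ℕ)
    (hr : Function.Injective r)
    (hb : ∀ v, (Finset.univ.filter fun w => G.Adj v w ∧ r w < r v).card < t) :
    ∀ L : V → Finset ℕ, (∀ v, (L v).card = t) →
      ∃ c : V → ℕ, (∀ v, c v ∈ L v) ∧ ∀ ⦃v w⦄, G.Adj v w → c v ≠ c w := by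
  intro L hL
  refine ⟨greedyColor G r L, fun v => (greedy_spec G r L v (by rw [hL]; exact hb v)).1,
    fun v w hadj => ?_⟩
  have hvw : v ≠ w := G.ne_of_adj hadj
  rcases lt_or_gt_of_ne (fun h => hvw (hr h)) with h | h
  · exact fun hc =>
      (greedy_spec G r L w (by rw [hL]; exact hb w)).2 v hadj.symm h hc.symm
  · exact (greedy_spec G r L v (by rw [hL]; exact hb v)).2 w hadj h

end Greedy

/-- Let `G` be an EFL graph of parameter `k`. If the subgraph induced by
the vertices of clique degree at least `2` has maximum degree at most `k − 1`, then `G` is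
`k`-choosable: `ch(G) ≤ k` (the list version of the Erdős–Faber–Lovász conjecture holds
for such graphs). -/
theorem choiceNumber_EFL_le_of_maxDegree_contacts {V : Type*} [Fintype V] [DecidableEq V]
    (k : ℕ) (G : SimpleGraph V) [DecidableRel G.Adj] (Q : Fin k → Finset V)
    (hcard : ∀ i, (Q i).card = k)
    (hinter : ∀ i j, i ≠ j → (Q i ∩ Q j).card ≤ 1)
    (hadj : ∀ u v, G.Adj u v ↔ u ≠ v ∧ ∃ i, u ∈ Q i ∧ v ∈ Q i)
    (hcover : ∀ v, ∃ i, v ∈ Q i)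
    (hdeg : ∀ v : V, 2 ≤ (Finset.univ.filter fun i => v ∈ Q i).card →
      (Finset.univ.filter fun w =>
        2 ≤ (Finset.univ.filter fun i => w ∈ Q i).card ∧ G.Adj v w).card ≤ k - 1) :
    choiceNumber G ≤ k := by
  apply Nat.sInf_le
  -- define clique degree and rank
  set cd : V → ℕ := fun v => (Finset.univ.filter fun i => v ∈ Q i).card with hcd
  set r : V → ℕ := fun v =>
    (if 2 ≤ cd v then 0 else Fintype.card V) + (Fintype.equivFin V v : ℕ) with hr
  have hrinj : Function.Injective r := by
    intro u v huv
    simp only [hr] at huv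
    have hu := (Fintype.equivFin V u).2
    have hv := (Fintype.equivFin V v).2
    have : (Fintype.equivFin V u : ℕ) = (Fintype.equivFin V v : ℕ) := by
      by_cases h1 : 2 ≤ cd u <;> by_cases h2 : 2 ≤ cd v <;>
        simp [h1, h2] at huv <;> omega
    exact (Fintype.equivFin V).injective (Fin.ext this)
  have hb : ∀ v, (Finset.univ.filter fun w => G.Adj v w ∧ r w < r v).card < k := by
    intro v
    obtain ⟨i, hi⟩ := hcover v
    have hk : 0 < k := i.pos
    by_cases h2 : 2 ≤ cd v
    · -- earlier neighbors all have clique degree ≥ 2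
      have hsub : (Finset.univ.filter fun w => G.Adj v w ∧ r w < r v) ⊆
          Finset.univ.filter fun w => 2 ≤ cd w ∧ G.Adj v w := by
        intro w hw
        simp only [Finset.mem_filter, Finset.mem_univ, true_and] at hw ⊢
        refine ⟨?_, hw.1⟩
        by_contra h3
        have := hw.2
        simp only [hr, h2, h3, if_pos, if_neg, not_false_iff] at this
        have := (Fintype.equivFin V v).2
        omega
      calc (Finset.univ.filter fun w => G.Adj v w ∧ r w < r v).card
          ≤ (Finset.univ.filter fun w => 2 ≤ cd w ∧ G.Adj v w).card :=
            Finset.card_le_card hsub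
        _ ≤ k - 1 := hdeg v h2
        _ < k := by omega
    · -- v lies in exactly one clique; neighbors ⊆ Q i \ {v}
      have hcd1 : cd v ≤ 1 := by omega
      have hsub : (Finset.univ.filter fun w => G.Adj v w ∧ r w < r v) ⊆ (Q i).erase v := by
        intro w hw
        simp only [Finset.mem_filter, Finset.mem_univ, true_and] at hw
        obtain ⟨hne, j, hvj, hwj⟩ := (hadj v w).mp hw.1
        have hij : j = i := by
          by_contra hji
          have : ({j, i} : Finset (Fin k)).card ≤ cd v := by
            apply Finset.card_le_card
            intro x hx
            simp only [Finset.mem_insert, Finset.mem_singleton] at hx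
            rcases hx with rfl | rfl <;> simp [hcd, hvj, hi]
          rw [Finset.card_insert_of_notMem (by simpa using hji), Finset.card_singleton] at this
          omega
        exact Finset.mem_erase.mpr ⟨hne.symm, hij ▸ hwj⟩
      calc (Finset.univ.filter fun w => G.Adj v w ∧ r w < r v).card
          ≤ ((Q i).erase v).card := Finset.card_le_card hsub
        _ ≤ (Q i).card - 1 := by rw [Finset.card_erase_of_mem hi]
        _ < k := by rw [hcard i]; omega
  exact choosable_of_rank G k r hrinj hb
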